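/- Let d ≥ 2 and let C ⊆ 𝕋 be a single periodic orbit of m_d which, as a set, is a rotation set for m_d with rotation number p/q (mod ℤ), where q ≥ 1, 0 ≤ p < q and gcd(p,q) = 1. Then C has exactly q elements, and m_d acts on C (in its cyclic order on the circle) as the rotation sending the i-th point to the (i+p)-th point modulo q. -/

import Mathlib

open Set MeasureTheory ENNReal

noncomputable section

instance : Fact ((0:ℝ) < 1) := ⟨one_pos⟩

/-- The circle `ℝ/ℤ`. -/
abbrev Circle1 : Type := AddCircle (1 : ℝ)

/-- The multiplication-by-`d` map `m_d` on the circle. -/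
def md (d : ℕ) : Circle1 → Circle1 := fun t => d • t

/-- `G : ℝ → ℝ` (monotone, commuting with `x ↦ x + 1`) is a lift of the circle map `g`. -/
def IsLift (g : Circle1 → Circle1) (G : CircleDeg1Lift) : Prop :=
  ∀ x : ℝ, g ((x : ℝ) : Circle1) = ((G x : ℝ) : Circle1)

/-- `g` is a monotone degree-one circle map. -/
def IsMonotoneDeg1 (g : Circle1 → Circle1) : Prop :=
  ∃ G : CircleDeg1Lift, IsLift g G

/-- `ρ` is the rotation number of the monotone degree-one circle map `g`:
the residue class mod `ℤ` of the translation number of a lift of `g`. -/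
def HasRotationNumber (g : Circle1 → Circle1) (ρ : Circle1) : Prop :=
  ∃ G : CircleDeg1Lift, IsLift g G ∧ ρ = ((G.translationNumber : ℝ) : Circle1)

/-- `X` is a rotation set for `m_d`. -/
def IsRotationSet (d : ℕ) (X : Set Circle1) : Prop :=
  X.Nonempty ∧ IsCompact X ∧ md d '' X = X ∧
    ∃ g : Circle1 → Circle1, IsMonotoneDeg1 g ∧ ∀ t ∈ X, g t = md d t

/-- `X` is a rotation set for `m_d` with rotation number `ρ`. -/
def IsRotationSetWith (d : ℕ) (X : Set Circle1) (ρ : Circle1) : Prop :=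
  X.Nonempty ∧ IsCompact X ∧ md d '' X = X ∧
    ∃ g : Circle1 → Circle1, (∀ t ∈ X, g t = md d t) ∧ HasRotationNumber g ρ

/-- A gap of `X` is a connected component of the complement of `X`. -/
def IsGap (X : Set Circle1) (I : Set Circle1) : Prop :=
  ∃ t ∈ Xᶜ, I = connectedComponentIn Xᶜ t

/-- `C` is a periodic orbit (cycle) of `m_d`. -/
def IsPeriodicOrbit (d : ℕ) (C : Set Circle1) : Prop :=
  ∃ (t : Circle1) (n : ℕ), 0 < n ∧ (md d)^[n] t = t ∧
    C = Set.range (fun k : Fin n => (md d)^[(k : ℕ)] t)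

/-- The number of points of `X` whose representative in `[0,1)` lies in `[0,1/2)`. -/
def s1 (X : Set Circle1) : ℕ :=
  {t ∈ X | ((AddCircle.equivIco 1 0 t : ℝ) < 1 / 2)}.ncard

/-! ### Auxiliary lemmas -/

/-- A strictly monotone surjective self-map of `ℤ` is a translation. -/
theorem aux_int_trans (s : ℤ → ℤ) (hm : StrictMono s) (hs : Function.Surjective s) :
    ∀ j, s j = s 0 + j := by
  have hsucc : ∀ a, s (a + 1) = s a + 1 := by
    intro a
    have h1 : s a + 1 ≤ s (a + 1) := hm (lt_add_one a)
    rcases eq_or_lt_of_le h1 with h | h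
    · exact h.symm
    · obtain ⟨b, hb⟩ := hs (s a + 1)
      rcases le_or_gt b a with hba | hba
      · have := hm.monotone hba; omega
      · have : a + 1 ≤ b := hba
        have := hm.monotone this; omega
  intro j
  induction j using Int.induction_on with
  | zero => simp
  | succ n ih => rw [hsucc, ih]; ring
  | pred n ih =>
      have := hsucc (-(n:ℤ) - 1)
      simp only [sub_add_cancel] at this
      omega

lemma aux_emod_lt (m : ℕ) (hm : 0 < m) (j : ℤ) : (j % (m:ℤ)).toNat < m := by
  have h1 : 0 ≤ j % (m:ℤ) := Int.emod_nonneg j (by exact_mod_cast hm.ne')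
  have h2 : j % (m:ℤ) < m := Int.emod_lt_of_pos j (by exact_mod_cast hm)
  omega

lemma aux_mod_of_lt (m : ℕ) (hm : 0 < m) (s a : ℤ) (h0 : 0 ≤ s) (h1 : s < m) :
    (s + a * (m:ℤ)) % (m:ℤ) = s ∧ (s + a * (m:ℤ)) / (m:ℤ) = a := by
  constructor
  · rw [Int.add_mul_emod_self_right]
    exact Int.emod_eq_of_lt h0 h1
  · rw [Int.add_mul_ediv_right _ _ (by exact_mod_cast hm.ne' : (m:ℤ) ≠ 0),
      Int.ediv_eq_zero_of_lt h0 h1, zero_add]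

lemma aux_decomp (m : ℕ) (hm : 0 < m) (j : ℤ) :
    ∃ r a : ℤ, 0 ≤ r ∧ r < m ∧ j = r + a * m := by
  refine ⟨j % (m:ℤ), j / (m:ℤ), Int.emod_nonneg j (by exact_mod_cast hm.ne'),
    Int.emod_lt_of_pos j (by exact_mod_cast hm), ?_⟩
  have := Int.mul_ediv_add_emod j (m:ℤ); linarith

/-- Unwrap a finite family on the circle to a map `ℤ → ℝ`. -/
def unwrap (m : ℕ) (hm : 0 < m) (x : Fin m → ℝ) (j : ℤ) : ℝ :=
  x ⟨(j % (m:ℤ)).toNat, aux_emod_lt m hm j⟩ + (j / (m:ℤ) : ℤ)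

lemma unwrap_eval (m : ℕ) (hm : 0 < m) (x : Fin m → ℝ) (i : Fin m) (a : ℤ) :
    unwrap m hm x (i + a * m) = x i + a := by
  obtain ⟨hmod, hdiv⟩ := aux_mod_of_lt m hm i a (by positivity) (by exact_mod_cast i.2)
  have hfin : (⟨((((i:ℤ)) + a * m) % (m:ℤ)).toNat, aux_emod_lt m hm _⟩ : Fin m) = i := by
    ext; simp [hmod]
  simp only [unwrap, hfin, hdiv]

lemma unwrap_coe (m : ℕ) (hm : 0 < m) (x : Fin m → ℝ) (i : Fin m) :
    unwrap m hm x (i : ℤ) = x i := by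
  have := unwrap_eval m hm x i 0; simpa using this

lemma unwrap_strictMono (m : ℕ) (hm : 0 < m) (x : Fin m → ℝ) (hx : StrictMono x)
    (hwin : x ⟨m - 1, by omega⟩ < x ⟨0, hm⟩ + 1) : StrictMono (unwrap m hm x) := by
  apply strictMono_int_of_lt_succ
  intro j
  obtain ⟨r, a, hr0, hrm, hdec⟩ := aux_decomp m hm j
  subst hdec
  have hj : unwrap m hm x (r + a * m) = x ⟨r.toNat, by omega⟩ + a := by
    have h := unwrap_eval m hm x ⟨r.toNat, by omega⟩ a
    simp only [Fin.val_mk, Int.toNat_of_nonneg hr0] at h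
    exact h
  rcases lt_or_eq_of_le (by omega : r + 1 ≤ m) with h | h
  · have hj1 : unwrap m hm x (r + a * m + 1) = x ⟨(r+1).toNat, by omega⟩ + a := by
      have heq : r + a * m + 1 = ((⟨(r+1).toNat, by omega⟩ : Fin m) : ℤ) + a * m := by
        simp [Int.toNat_of_nonneg (by omega : (0:ℤ) ≤ r + 1)]; ring
      rw [heq, unwrap_eval]
    rw [hj, hj1]
    have hlt : (⟨r.toNat, by omega⟩ : Fin m) < ⟨(r+1).toNat, by omega⟩ := by
      simp only [Fin.mk_lt_mk]; omega
    have := hx hlt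
    linarith
  · have hj1 : unwrap m hm x (r + a * m + 1) = x ⟨0, hm⟩ + (a + 1) := by
      have heq : r + a * m + 1 = ((⟨0, hm⟩ : Fin m) : ℤ) + (a + 1) * m := by
        rw [add_one_mul]; simp; omega
      rw [heq, unwrap_eval]; push_cast; ring
    rw [hj, hj1]
    have hrlast : (⟨r.toNat, by omega⟩ : Fin m) = ⟨m - 1, by omega⟩ := by
      simp only [Fin.mk.injEq]; omega
    rw [hrlast]
    push_cast
    linarith

lemma coe_rep (t : Circle1) : ((AddCircle.equivIco 1 0 t : ℝ) : Circle1) = t :=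
  (AddCircle.equivIco 1 0).symm_apply_apply t

lemma rep_coe (x : ℝ) (h0 : 0 ≤ x) (h1 : x < 1) :
    ((AddCircle.equivIco 1 0 ((x : ℝ) : Circle1) : ℝ)) = x := by
  have hx : x ∈ Ico (0:ℝ) (0 + 1) := by constructor <;> simpa
  have h2 : (AddCircle.equivIco 1 0).symm ⟨x, hx⟩ = ((x : ℝ) : Circle1) := rfl
  have := (AddCircle.equivIco 1 0).apply_symm_apply ⟨x, hx⟩
  rw [h2] at this
  rw [this]

lemma rep_mem (t : Circle1) : (AddCircle.equivIco 1 0 t : ℝ) ∈ Ico (0:ℝ) 1 := by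
  have := (AddCircle.equivIco 1 0 t).2
  simpa using this

lemma coe_eq_coe_iff (a b : ℝ) : ((a : ℝ) : Circle1) = b ↔ ∃ n : ℤ, a = b + n := by
  constructor
  · intro h
    have := QuotientAddGroup.eq.mp h.symm
    obtain ⟨n, hn⟩ := AddSubgroup.mem_zmultiples_iff.mp this
    exact ⟨n, by simp at hn; linarith⟩
  · rintro ⟨n, rfl⟩
    symm
    apply (QuotientAddGroup.eq).mpr
    exact AddSubgroup.mem_zmultiples_iff.mpr ⟨n, by simp⟩

/-- two integers in `[0,q)` congruent mod `q` are equal -/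
lemma aux_bounded (q : ℕ) (a b D : ℤ) (h : a = b + D * q)
    (ha0 : 0 ≤ a) (haq : a < q) (hb0 : 0 ≤ b) (hbq : b < q) : a = b := by
  have hq0 : (0:ℤ) ≤ q := by positivity
  have hD : D = 0 := by
    rcases lt_trichotomy D 0 with hD | hD | hD
    · have : D ≤ -1 := by omega
      nlinarith
    · exact hD
    · have : 1 ≤ D := by omega
      nlinarith
  rw [h, hD]; ring

lemma aux_fin_add (m : ℕ) (hm : 0 < m) (i k j : Fin m) (D : ℤ)
    (h : (j:ℤ) = (i:ℤ) + (k:ℤ) + D * m) : j = i + k := by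
  have hval : ((i + k : Fin m) : ℕ) = ((i:ℕ) + (k:ℕ)) % m := Fin.val_add i k
  have hik : ((i:ℤ) + (k:ℤ)) = ((i:ℕ) + (k:ℕ) : ℕ) := by push_cast; ring
  rcases lt_or_ge ((i:ℕ) + (k:ℕ)) m with hc | hc
  · have h2 : (((i:ℕ) + (k:ℕ)) % m) = (i:ℕ) + (k:ℕ) := Nat.mod_eq_of_lt hc
    have : (j:ℤ) = ((i:ℕ) + (k:ℕ) : ℕ) := by
      apply aux_bounded m _ _ D (by rw [h, hik]) (by positivity) (by exact_mod_cast j.2)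
        (by positivity) (by exact_mod_cast hc)
    ext
    rw [hval, h2]
    exact_mod_cast this
  · have hc2 : (i:ℕ) + (k:ℕ) < 2 * m := by
      have := i.2; have := k.2; omega
    have h2 : (((i:ℕ) + (k:ℕ)) % m) = (i:ℕ) + (k:ℕ) - m := by
      rw [Nat.mod_eq_sub_mod hc, Nat.mod_eq_of_lt (by omega)]
    have : (j:ℤ) = ((i:ℕ) + (k:ℕ) - m : ℕ) := by
      apply aux_bounded m _ _ (D + 1)
      · push_cast [Nat.cast_sub hc]; rw [h]; push_cast; ring
      · positivity
      · exact_mod_cast j.2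
      · positivity
      · push_cast [Nat.cast_sub hc]; push_cast at hc2 ⊢; omega
    ext
    rw [hval, h2]
    exact_mod_cast this

/-- A periodic orbit of `m_d` which is a rotation set with rotation
number `p/q` (reduced) has exactly `q` elements, and `m_d` acts on it, in its cyclic order
on the circle, as the rotation sending the `i`-th point to the `(i+p)`-th point mod `q`. -/
theorem cycle_with_rotation_number_structure
    (d : ℕ) (hd : 2 ≤ d) (C : Set Circle1)
    (p q : ℕ) (hq : 1 ≤ q) (hpq : p < q) (hcop : Nat.Coprime p q)
    (hC : IsPeriodicOrbit d C)
    (hrot : IsRotationSetWith d C ((((p : ℝ) / (q : ℝ)) : ℝ) : Circle1)) :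
    C.ncard = q ∧
      ∃ e : Fin q → Circle1,
        Function.Injective e ∧ Set.range e = C ∧
        StrictMono (fun i : Fin q => ((AddCircle.equivIco 1 0 (e i) : ℝ))) ∧
        ∀ i : Fin q, md d (e i) = e (i + ⟨p, hpq⟩) := by
  classical
  obtain ⟨hne, hcpt, himg, g, hgC, G, hGlift, hρ⟩ := hrot
  obtain ⟨t₀, n, hn, hper, hCeq⟩ := hC
  have hfin : C.Finite := by rw [hCeq]; exact Set.finite_range _
  set m := C.ncard with hmdef
  have hm : 0 < m := (Set.ncard_pos hfin).mpr hne
  haveI : NeZero m := ⟨hm.ne'⟩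
  -- enumeration of C in increasing order of representatives
  set rep : Circle1 → ℝ := fun t => (AddCircle.equivIco 1 0 t : ℝ) with hrepdef
  have hrep_inj : Function.Injective rep := by
    intro a b h
    have := congrArg (fun x : ℝ => ((x : ℝ) : Circle1)) h
    simpa [hrepdef, coe_rep] using this
  set F : Finset ℝ := hfin.toFinset.image rep with hFdef
  have hFcard : F.card = m := by
    rw [hFdef, Finset.card_image_of_injective _ hrep_inj]
    exact (Set.ncard_eq_toFinset_card _ hfin).symm
  set oe := F.orderIsoOfFin hFcard with hoedef
  set xx : Fin m → ℝ := fun i => (oe i : ℝ) with hxxdef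
  have hxxmono : StrictMono xx := by
    intro i j h
    exact_mod_cast oe.strictMono h
  have hxxmem : ∀ i, ∃ t ∈ C, rep t = xx i := by
    intro i
    have : (oe i : ℝ) ∈ F := by
      have := (oe i).2
      simpa using this
    obtain ⟨t, ht, hr⟩ := Finset.mem_image.mp this
    exact ⟨t, hfin.mem_toFinset.mp ht, hr⟩
  have hxx01 : ∀ i, 0 ≤ xx i ∧ xx i < 1 := by
    intro i
    obtain ⟨t, _, hr⟩ := hxxmem i
    rw [← hr]
    exact ⟨(rep_mem t).1, (rep_mem t).2⟩
  set e : Fin m → Circle1 := fun i => ((xx i : ℝ) : Circle1) with hedef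
  have he_mem : ∀ i, e i ∈ C := by
    intro i
    obtain ⟨t, ht, hr⟩ := hxxmem i
    have : e i = t := by rw [hedef]; simp only [← hr, hrepdef]; exact coe_rep t
    rwa [this]
  have hrep_e : ∀ i, rep (e i) = xx i := by
    intro i
    exact rep_coe (xx i) (hxx01 i).1 (hxx01 i).2
  have he_inj : Function.Injective e := by
    intro a b h
    exact hxxmono.injective (by rw [← hrep_e a, ← hrep_e b, h])
  have he_surj : ∀ t ∈ C, ∃ i, e i = t := by
    intro t ht
    have : rep t ∈ F := by
      rw [hFdef]
      exact Finset.mem_image_of_mem rep (hfin.mem_toFinset.mpr ht)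
    obtain ⟨i, hi⟩ := (F.orderIsoOfFin hFcard).surjective ⟨rep t, this⟩
    refine ⟨i, ?_⟩
    have hxi : xx i = rep t := by
      rw [hxxdef]; exact congrArg Subtype.val hi
    rw [hedef]; simp only [hxi, hrepdef]; exact coe_rep t
  have hrange : Set.range e = C := by
    apply Set.Subset.antisymm
    · rintro _ ⟨i, rfl⟩; exact he_mem i
    · intro t ht; obtain ⟨i, hi⟩ := he_surj t ht; exact ⟨i, hi⟩
  -- the permutation induced by `md d` on the cycle
  have hmd_mem : ∀ i, md d (e i) ∈ C := by
    intro i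
    rw [← himg]
    exact Set.mem_image_of_mem _ (he_mem i)
  have hex : ∀ i, ∃ j, e j = md d (e i) := fun i => he_surj _ (hmd_mem i)
  choose σ hσ using hex
  have hσ_surj : Function.Surjective σ := by
    intro j
    have : e j ∈ md d '' C := by rw [himg]; exact he_mem j
    obtain ⟨t, ht, hmt⟩ := this
    obtain ⟨i, rfl⟩ := he_surj t ht
    exact ⟨i, he_inj ((hσ i).trans hmt)⟩
  have hσ_inj : Function.Injective σ := Finite.injective_iff_surjective.mpr hσ_surj
  -- lifted images
  set y : Fin m → ℝ := fun i => G (xx i) with hydef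
  have hy_coe : ∀ i, ((y i : ℝ) : Circle1) = e (σ i) := by
    intro i
    have h1 : g (e i) = ((y i : ℝ) : Circle1) := hGlift (xx i)
    rw [← h1, hgC _ (he_mem i), hσ i]
  have hy_mono : StrictMono y := by
    intro i j h
    have h1 : y i ≤ y j := G.mono (le_of_lt (hxxmono h))
    rcases eq_or_lt_of_le h1 with h2 | h2
    · exfalso
      have : e (σ i) = e (σ j) := by rw [← hy_coe, ← hy_coe, h2]
      exact (ne_of_lt h) (hσ_inj (he_inj this))
    · exact h2
  -- integer offsets
  have hcex : ∀ i, ∃ ci : ℤ, y i = xx (σ i) + ci := by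
    intro i
    exact (coe_eq_coe_iff (y i) (xx (σ i))).mp (hy_coe i)
  choose c hc using hcex
  -- windows
  have hxx_win : xx ⟨m - 1, by omega⟩ < xx ⟨0, hm⟩ + 1 := by
    have := (hxx01 ⟨m - 1, by omega⟩).2
    have := (hxx01 ⟨0, hm⟩).1
    linarith
  have hy_win : y ⟨m - 1, by omega⟩ < y ⟨0, hm⟩ + 1 := by
    by_cases hm1 : (⟨m - 1, by omega⟩ : Fin m) = ⟨0, hm⟩
    · rw [hm1]; linarith
    · have h1 : y ⟨m - 1, by omega⟩ ≤ y ⟨0, hm⟩ + 1 := by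
        have := G.mono (le_of_lt hxx_win)
        rw [G.map_add_one] at this
        exact this
      rcases eq_or_lt_of_le h1 with h2 | h2
      · exfalso
        have h3 : ((y ⟨m - 1, by omega⟩ : ℝ) : Circle1) = ((y ⟨0, hm⟩ : ℝ) : Circle1) := by
          rw [h2]
          exact (coe_eq_coe_iff _ _).mpr ⟨1, by push_cast; ring⟩
        rw [hy_coe, hy_coe] at h3
        exact hm1 (hσ_inj (he_inj h3))
      · exact h2
  -- unwrapped maps
  set X : ℤ → ℝ := unwrap m hm xx with hXdef
  set Y : ℤ → ℝ := unwrap m hm y with hYdef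
  have hXmono : StrictMono X := unwrap_strictMono m hm xx hxxmono hxx_win
  have hYmono : StrictMono Y := unwrap_strictMono m hm y hy_mono hy_win
  -- the integer shadow map
  set s : ℤ → ℤ := fun j =>
    (σ ⟨(j % (m:ℤ)).toNat, aux_emod_lt m hm j⟩ : ℤ)
      + c ⟨(j % (m:ℤ)).toNat, aux_emod_lt m hm j⟩ * m + (j / (m:ℤ)) * m with hsdef
  have hYX : ∀ j, Y j = X (s j) := by
    intro j
    set i : Fin m := ⟨(j % (m:ℤ)).toNat, aux_emod_lt m hm j⟩ with hidef
    have h1 : Y j = y i + ((j / (m:ℤ) : ℤ) : ℝ) := rfl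
    have harg : s j = ((σ i : ℕ) : ℤ) + (c i + j / (m:ℤ)) * m := by
      show (σ i : ℤ) + c i * m + (j / (m:ℤ)) * m = _
      ring
    have h2 : X (s j) = xx (σ i) + ((c i + j / (m:ℤ) : ℤ) : ℝ) := by
      rw [harg, hXdef]
      exact unwrap_eval m hm xx (σ i) (c i + j / (m:ℤ))
    rw [h1, h2, hc i]
    push_cast
    ring
  have hs_mono : StrictMono s := by
    intro a b h
    have : Y a < Y b := hYmono h
    rw [hYX, hYX] at this
    exact hXmono.lt_iff_lt.mp this
  have hs_surj : Function.Surjective s := by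
    intro w
    obtain ⟨b, a, hb0, hbm, hw⟩ := aux_decomp m hm w
    obtain ⟨i, hi⟩ := hσ_surj ⟨b.toNat, by omega⟩
    refine ⟨(i : ℤ) + (a - c i) * m, ?_⟩
    obtain ⟨hmod, hdiv⟩ := aux_mod_of_lt m hm (i : ℤ) (a - c i) (by positivity)
      (by exact_mod_cast i.2)
    have hfin_i : (⟨((((i:ℤ)) + (a - c i) * m) % (m:ℤ)).toNat, aux_emod_lt m hm _⟩ : Fin m)
        = i := by
      ext; simp [hmod]
    show (σ _ : ℤ) + c _ * m + _ = w
    simp only [hfin_i, hdiv, hi, hw]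
    push_cast [Int.toNat_of_nonneg hb0]
    ring
  have hs_trans : ∀ j, s j = s 0 + j := aux_int_trans s hs_mono hs_surj
  -- the rotation amount
  set k : Fin m := σ ⟨0, hm⟩ with hkdef
  set c₀ : ℤ := c ⟨0, hm⟩ with hc0def
  set κ : ℤ := (k : ℤ) + c₀ * m with hκdef
  have hzero_fin : (⟨((0 : ℤ) % (m:ℤ)).toNat, aux_emod_lt m hm 0⟩ : Fin m) = ⟨0, hm⟩ := by
    ext; simp
  have hs0 : s 0 = κ := by
    show (σ _ : ℤ) + c _ * m + ((0:ℤ) / (m:ℤ)) * m = κ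
    rw [hzero_fin, Int.zero_ediv, hκdef, hkdef, hc0def]
    ring
  -- σ is rotation by k
  have hσk : ∀ i : Fin m, σ i = i + k := by
    intro i
    have hfi : (⟨(((i:ℤ)) % (m:ℤ)).toNat, aux_emod_lt m hm _⟩ : Fin m) = i := by
      ext
      simp [Int.emod_eq_of_lt (by positivity : (0:ℤ) ≤ (i:ℤ)) (by exact_mod_cast i.2 : (i:ℤ) < m)]
    have hdivi : ((i:ℤ)) / (m:ℤ) = 0 :=
      Int.ediv_eq_zero_of_lt (by positivity) (by exact_mod_cast i.2)
    have h1 : s (i : ℤ) = κ + i := by rw [hs_trans, hs0]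
    have h2 : (σ i : ℤ) + c i * m = κ + i := by
      have h3 : s (i : ℤ) = (σ i : ℤ) + c i * m := by
        show (σ _ : ℤ) + c _ * m + ((i:ℤ) / (m:ℤ)) * m = _
        rw [hfi, hdivi]; ring
      rw [← h3, h1]
    apply aux_fin_add m hm i k (σ i) (c₀ - c i)
    rw [hκdef] at h2
    push_cast at h2 ⊢
    linarith
  have hmd_e : ∀ i, md d (e i) = e (i + k) := by
    intro i
    rw [← hσ i, hσk i]
  -- the lift translates the unwrapped family by κ
  have hGX : ∀ j, G (X j) = X (j + κ) := by
    intro j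
    set i : Fin m := ⟨(j % (m:ℤ)).toNat, aux_emod_lt m hm j⟩ with hidef
    have h1 : G (X j) = y i + ((j / (m:ℤ) : ℤ) : ℝ) := by
      show G (xx i + ((j / (m:ℤ) : ℤ) : ℝ)) = _
      rw [G.map_add_int]
    have h2 : Y j = y i + ((j / (m:ℤ) : ℤ) : ℝ) := rfl
    rw [h1, ← h2, hYX, hs_trans, hs0]
    congr 1
    ring
  have hGiter : ∀ N : ℕ, G^[N] (X 0) = X ((N:ℤ) * κ) := by
    intro N
    induction N with
    | zero => simp
    | succ N ih =>
        rw [Function.iterate_succ_apply', ih, hGX]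
        congr 1
        push_cast
        ring
  have hX0 : X (0:ℤ) = xx ⟨0, hm⟩ := by
    have h := unwrap_coe m hm xx ⟨0, hm⟩
    rw [hXdef]
    simpa using h
  have hGm : (G ^ m : CircleDeg1Lift) (X 0) = X 0 + (κ : ℝ) := by
    have h1 : ⇑(G ^ m) = G^[m] := CircleDeg1Lift.coe_pow G m
    have harg : ((m:ℕ):ℤ) * κ = (((⟨0, hm⟩ : Fin m) : ℕ) : ℤ) + κ * m := by
      push_cast
      ring
    rw [h1, hGiter m, harg, hXdef, unwrap_eval m hm xx ⟨0, hm⟩ κ, ← hXdef, hX0]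
  have hτm : ((m:ℕ):ℝ) * G.translationNumber = (κ:ℝ) := by
    have h2 : (G ^ m).translationNumber = ((κ:ℤ):ℝ) :=
      (G ^ m).translationNumber_of_eq_add_int hGm
    rw [← h2, G.translationNumber_pow]
  obtain ⟨tI, htI⟩ := (coe_eq_coe_iff _ _).mp hρ
  have hqR : (0:ℝ) < q := by exact_mod_cast hq
  have hZ : κ * q = m * p - m * tI * q := by
    have hreal : (κ:ℝ) * q = m * p - m * tI * q := by
      have hτ : G.translationNumber = p / q - tI := by linarith
      rw [← hτm, hτ]
      field_simp
    exact_mod_cast hreal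
  -- transitivity of the orbit gives coprimality of k and m
  have hiter_e : ∀ (jn : ℕ) (i : Fin m), (md d)^[jn] (e i) = e (i + jn • k) := by
    intro jn
    induction jn with
    | zero => intro i; simp
    | succ jn ih =>
        intro i
        rw [Function.iterate_succ_apply', ih, hmd_e]
        congr 1
        rw [succ_nsmul, add_assoc]
  have ht0C : t₀ ∈ C := by
    rw [hCeq]
    exact ⟨⟨0, hn⟩, by simp⟩
  obtain ⟨i₀, hi₀⟩ := he_surj t₀ ht0C
  have h1C : e (i₀ + 1) ∈ C := he_mem _
  rw [hCeq] at h1C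
  obtain ⟨jn, hjn0⟩ := h1C
  have hjn : (md d)^[(jn:ℕ)] t₀ = e (i₀ + 1) := hjn0
  rw [← hi₀, hiter_e] at hjn
  have hjk : ((jn:ℕ)) • k = 1 := add_left_cancel (he_inj hjn)
  have hval_nsmul : ∀ (a : ℕ), ((a • k : Fin m) : ℕ) = a * (k : ℕ) % m := by
    intro a
    induction a with
    | zero => simp
    | succ a ih =>
        rw [succ_nsmul, Fin.val_add, ih, Nat.mod_add_mod]
        congr 1
        ring
  have hkm_cop : Nat.Coprime ((k : Fin m) : ℕ) m := by
    have h2 : ((jn:ℕ) * (k : ℕ)) % m = 1 % m := by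
      rw [← hval_nsmul, hjk, Fin.val_one']
    rcases eq_or_lt_of_le (show 1 ≤ m from hm) with hm1 | hm2
    · have hone : m = 1 := hm1.symm
      simp [Nat.Coprime, hone]
    · have h3 : 1 % m = 1 := Nat.mod_eq_of_lt hm2
      rw [h3] at h2
      have h4 := Nat.div_add_mod ((jn:ℕ) * (k:ℕ)) m
      rw [h2] at h4
      have d1 : Nat.gcd ((k:ℕ)) m ∣ (jn:ℕ) * (k:ℕ) := Dvd.dvd.mul_left (Nat.gcd_dvd_left _ _) _
      have d2 : Nat.gcd ((k:ℕ)) m ∣ m * ((jn:ℕ) * (k:ℕ) / m) :=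
        Dvd.dvd.mul_right (Nat.gcd_dvd_right _ _) _
      have h5 : (jn:ℕ) * (k:ℕ) - m * ((jn:ℕ) * (k:ℕ) / m) = 1 := by omega
      have hg : Nat.gcd ((k:ℕ)) m ∣ 1 := h5 ▸ Nat.dvd_sub d1 d2
      exact Nat.dvd_one.mp hg
  have hκm : IsCoprime κ ((m:ℕ):ℤ) := by
    have h1 : IsCoprime (((k:ℕ):ℤ)) ((m:ℤ)) := by
      rw [Int.isCoprime_iff_gcd_eq_one, Int.gcd_natCast_natCast]
      exact hkm_cop
    have h2 := h1.add_mul_left_left c₀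
    rw [hκdef]
    convert h2 using 2
    · rfl
    · exact mul_comm c₀ (m:ℤ)
  have hqp : IsCoprime ((q:ℤ)) ((p:ℤ)) := by
    rw [Int.isCoprime_iff_gcd_eq_one, Int.gcd_natCast_natCast]
    exact Nat.coprime_comm.mp hcop
  have hmq_dvd : ((m:ℕ):ℤ) ∣ (q:ℤ) := by
    have h6 : ((m:ℤ)) ∣ κ * q := ⟨p - tI * q, by linear_combination hZ⟩
    exact (hκm.symm).dvd_of_dvd_mul_left h6
  have hqm_dvd : ((q:ℕ):ℤ) ∣ (m:ℤ) := by
    have h7 : ((q:ℤ)) ∣ (p:ℤ) * (m:ℤ) := ⟨κ + m * tI, by linear_combination -hZ⟩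
    exact hqp.dvd_of_dvd_mul_left h7
  have hmq : m = q := Nat.dvd_antisymm (by exact_mod_cast hmq_dvd) (by exact_mod_cast hqm_dvd)
  subst hmq
  -- identify k with p
  have hκval : κ = p - tI * m := by
    have hm0 : ((m:ℕ):ℤ) ≠ 0 := by exact_mod_cast hm.ne'
    apply mul_right_cancel₀ hm0
    linear_combination hZ
  have hkp : ((k : Fin m) : ℕ) = p := by
    have h8 : (((k:ℕ)):ℤ) = (p:ℤ) + (-(tI + c₀)) * m := by
      rw [hκdef] at hκval
      linarith
    have h9 := aux_bounded m (((k:ℕ)):ℤ) (p:ℤ) (-(tI + c₀)) h8 (by positivity)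
      (by exact_mod_cast k.2) (by positivity) (by exact_mod_cast hpq)
    exact_mod_cast h9
  refine ⟨rfl, e, he_inj, hrange, ?_, ?_⟩
  · have heq : (fun i : Fin m => ((AddCircle.equivIco 1 0 (e i) : ℝ))) = xx :=
      funext fun i => hrep_e i
    rw [heq]
    exact hxxmono
  · intro i
    rw [hmd_e i]
    congr 1
    have hkfin : k = (⟨p, hpq⟩ : Fin m) := by
      ext
      exact hkp
    rw [hkfin]
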